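/- Let r ∈ ℕ, let α, α₁ ∈ ℝ with |α − α₁| < 2^{−r−1}, and let (f_n)_{n≥0} be a sequence of lifts of orientation-preserving C^∞ circle diffeomorphisms with f₀ = R_{α₁} such that d_{n+r}(f_{n−1}, f_n) < 2^{−n−r−1} for all n ≥ 1. Then there exists a lift f of an orientation-preserving C^∞ circle diffeomorphism such that for every s ∈ ℕ, ‖f_n − f‖_s → 0 and ‖f_n^{−1} − f^{−1}‖_s → 0 as n → ∞, and d_r(f, R_α) < 2^{−r}. -/

import Mathlib

noncomputable section
open MeasureTheory Filter Topology

/-- A lift of an orientation-preserving `C^∞` circle diffeomorphism: a `C^∞` map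
`f : ℝ → ℝ` with `f (x+1) = f x + 1` and everywhere positive derivative. -/
def IsCircleDiffeoLift (f : ℝ → ℝ) : Prop :=
  ContDiff ℝ (⊤ : ℕ∞) f ∧ (∀ x : ℝ, f (x + 1) = f x + 1) ∧ ∀ x : ℝ, 0 < deriv f x

/-- The `C^r` norm `‖φ‖_r = max_{0 ≤ i ≤ r} sup_x |φ^{(i)}(x)|`. -/
def CrNorm (r : ℕ) (φ : ℝ → ℝ) : ℝ :=
  (Finset.range (r + 1)).sup' (Finset.nonempty_range_iff.mpr r.succ_ne_zero)
    fun i => ⨆ x : ℝ, |iteratedDeriv i φ x|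

/-- `d_r(f, g) = max {‖f - g‖_r, ‖f⁻¹ - g⁻¹‖_r}`. -/
def liftDist (r : ℕ) (f g : ℝ → ℝ) : ℝ :=
  max (CrNorm r (fun x => f x - g x))
    (CrNorm r (fun x => Function.invFun f x - Function.invFun g x))

/-- `|f|_r = max {‖f - id‖_r, ‖f⁻¹ - id‖_r, 1}`. -/
def liftNorm (r : ℕ) (f : ℝ → ℝ) : ℝ :=
  max (max (CrNorm r (fun x => f x - x)) (CrNorm r (fun x => Function.invFun f x - x))) 1

/-- The lift `x ↦ x + a` of the rotation by `a`. -/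
def RotLift (a : ℝ) : ℝ → ℝ := fun x => x + a

/-- The rotation number of the circle diffeomorphism induced by the lift `f` equals `a`
(mod 1): the translation number `lim (fⁿ(0) - 0)/n` equals `a + k` for some integer `k`. -/
def HasRotationNumber (f : ℝ → ℝ) (a : ℝ) : Prop :=
  ∃ k : ℤ, Tendsto (fun n : ℕ => f^[n] 0 / (n : ℝ)) atTop (nhds (a + k))

/-- The lift of the `i`-th iterate (`i ∈ ℤ`) of the circle diffeomorphism induced by `f`. -/
def zpowLift (f : ℝ → ℝ) : ℤ → ℝ → ℝ := fun i =>
  if 0 ≤ i then f^[i.toNat] else (Function.invFun f)^[(-i).toNat]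

/-- The ratio set of a circle diffeomorphism, described through the family `Fz i` of its
iterates (`i ∈ ℤ`) and the family `D i` of the derivatives of its iterates: `t ≥ 0` lies in
the ratio set iff for every Borel `A` of positive Haar measure and every `ε > 0` there are a
Borel `B ⊆ A` of positive measure and `i ∈ ℤ` with `Fz i '' B ⊆ A` and `|D i x - t| < ε`
on `B`. -/
def ratioSet (Fz : ℤ → UnitAddCircle → UnitAddCircle) (D : ℤ → UnitAddCircle → ℝ) : Set ℝ :=
  {t : ℝ | 0 ≤ t ∧ ∀ A : Set UnitAddCircle, MeasurableSet A → 0 < volume A →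
    ∀ ε : ℝ, 0 < ε → ∃ B : Set UnitAddCircle, MeasurableSet B ∧ B ⊆ A ∧ 0 < volume B ∧
      ∃ i : ℤ, Fz i '' B ⊆ A ∧ ∀ x ∈ B, |D i x - t| < ε}

/-- A lift of an orientation-preserving `C¹` circle diffeomorphism. -/
def IsC1CircleLift (f : ℝ → ℝ) : Prop :=
  ContDiff ℝ 1 f ∧ (∀ x : ℝ, f (x + 1) = f x + 1) ∧ ∀ x : ℝ, 0 < deriv f x

namespace Stmt15
open Function Set


lemma periodic_iteratedDeriv {ψ : ℝ → ℝ} (h : Function.Periodic ψ 1) (i : ℕ) :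
    Function.Periodic (iteratedDeriv i ψ) 1 := by
  intro x
  have h1 : (fun y : ℝ => ψ (y + 1)) = ψ := funext h
  have h2 := congrFun (iteratedDeriv_comp_add_const i ψ 1) x
  rw [h1] at h2
  exact h2.symm

lemma periodic_bddAbove {ψ : ℝ → ℝ} (hc : Continuous ψ) (h : Function.Periodic ψ 1) :
    BddAbove (Set.range fun x => |ψ x|) := by
  have hcomp : IsCompact ((fun x => |ψ x|) '' Set.Icc (0:ℝ) 1) :=
    isCompact_Icc.image hc.abs
  refine hcomp.bddAbove.mono ?_
  rintro - ⟨x, rfl⟩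
  refine ⟨x - (⌊x⌋ : ℝ), ⟨by simp [Int.floor_le], by
    have := Int.lt_floor_add_one x; linarith⟩, ?_⟩
  have h2 : ψ (x - (⌊x⌋ : ℝ) * 1) = ψ x := h.sub_int_mul_eq ⌊x⌋
  simp only [mul_one] at h2
  show |ψ (x - (⌊x⌋:ℝ))| = |ψ x|
  rw [h2]

lemma crNorm_nonneg (s : ℕ) (φ : ℝ → ℝ) : 0 ≤ CrNorm s φ := by
  have h0 : (0:ℝ) ≤ ⨆ x : ℝ, |iteratedDeriv 0 φ x| := Real.iSup_nonneg fun x => abs_nonneg _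
  exact h0.trans (Finset.le_sup' (fun i => ⨆ x : ℝ, |iteratedDeriv i φ x|)
    (Finset.mem_range.mpr s.succ_pos))

lemma crNorm_le {s : ℕ} {φ : ℝ → ℝ} {b : ℝ} (hb : 0 ≤ b)
    (h : ∀ i, i ≤ s → ∀ x, |iteratedDeriv i φ x| ≤ b) : CrNorm s φ ≤ b := by
  refine Finset.sup'_le _ _ fun i hi => Real.iSup_le (fun x => ?_) hb
  exact h i (Nat.lt_succ_iff.mp (Finset.mem_range.mp hi)) x

lemma abs_iteratedDeriv_le_crNorm {φ : ℝ → ℝ} (hφ : ContDiff ℝ (⊤:ℕ∞) φ)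
    (hp : Function.Periodic φ 1) {i s : ℕ} (hi : i ≤ s) (x : ℝ) :
    |iteratedDeriv i φ x| ≤ CrNorm s φ := by
  have hc : Continuous (iteratedDeriv i φ) :=
    hφ.continuous_iteratedDeriv i (by exact_mod_cast le_top)
  have h1 : |iteratedDeriv i φ x| ≤ ⨆ y, |iteratedDeriv i φ y| :=
    le_ciSup (periodic_bddAbove hc (periodic_iteratedDeriv hp i)) x
  exact h1.trans (Finset.le_sup' (fun j => ⨆ y : ℝ, |iteratedDeriv j φ y|)
    (Finset.mem_range.mpr (by omega)))

lemma iteratedDeriv_sub' {f g : ℝ → ℝ} (hf : ContDiff ℝ (⊤:ℕ∞) f)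
    (hg : ContDiff ℝ (⊤:ℕ∞) g) (i : ℕ) (x : ℝ) :
    iteratedDeriv i (fun x => f x - g x) x = iteratedDeriv i f x - iteratedDeriv i g x := by
  have : (fun x => f x - g x) = f - g := rfl
  rw [this, ← iteratedDerivWithin_univ, ← iteratedDerivWithin_univ, ← iteratedDerivWithin_univ]
  exact iteratedDerivWithin_sub (Set.mem_univ x) uniqueDiffOn_univ
    ((hf.of_le (by exact_mod_cast le_top)).contDiffWithinAt)
    ((hg.of_le (by exact_mod_cast le_top)).contDiffWithinAt)

lemma iteratedDeriv_add_const' {φ : ℝ → ℝ} (c : ℝ) {i : ℕ} (hi : 0 < i) (x : ℝ) :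
    iteratedDeriv i (fun x => φ x + c) x = iteratedDeriv i φ x := by
  have : (fun x => φ x + c) = (fun x => c + φ x) := by funext y; ring
  rw [this, ← iteratedDerivWithin_univ, ← iteratedDerivWithin_univ]
  exact iteratedDerivWithin_const_add hi c



lemma sub_lift_periodic {f g : ℝ → ℝ} (hf : ∀ x, f (x+1) = f x + 1)
    (hg : ∀ x, g (x+1) = g x + 1) : Function.Periodic (fun x => f x - g x) 1 := by
  intro x; simp [hf, hg]

lemma lift_strictMono {f : ℝ → ℝ} (hf : IsCircleDiffeoLift f) : StrictMono f :=
  strictMono_of_deriv_pos hf.2.2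

lemma lift_surjective {f : ℝ → ℝ} (hf : IsCircleDiffeoLift f) : Function.Surjective f := by
  obtain ⟨hsm, hper, _⟩ := hf
  have hp : Function.Periodic (fun x => f x - x) 1 := by intro x; simp [hper]
  have hc : Continuous fun x => f x - x := hsm.continuous.sub continuous_id
  obtain ⟨M, hM⟩ : ∃ M, ∀ x, |f x - x| ≤ M := by
    obtain ⟨M, hM⟩ := periodic_bddAbove hc hp
    exact ⟨M, fun x => hM ⟨x, rfl⟩⟩
  refine Continuous.surjective hsm.continuous ?_ ?_
  · refine tendsto_atTop_mono (fun x => ?_) (tendsto_atTop_add_const_right _ (-M) tendsto_id)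
    have := (abs_le.mp (hM x)).1; simp only [id]; linarith
  · refine tendsto_atBot_mono (fun x => ?_) (tendsto_atBot_add_const_right _ M tendsto_id)
    have := (abs_le.mp (hM x)).2; simp only [id]; linarith

lemma lift_inv {f : ℝ → ℝ} (hf : IsCircleDiffeoLift f) :
    IsCircleDiffeoLift (Function.invFun f) ∧
    Function.LeftInverse (Function.invFun f) f ∧
    Function.RightInverse (Function.invFun f) f := by
  obtain ⟨hsm, hper, hpos⟩ := hf
  have hmono := lift_strictMono ⟨hsm, hper, hpos⟩
  have hsurj := lift_surjective ⟨hsm, hper, hpos⟩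
  have hinj := hmono.injective
  set g := Function.invFun f with hg
  have hli : Function.LeftInverse g f := Function.leftInverse_invFun hinj
  have hri : Function.RightInverse g f := Function.rightInverse_invFun hsurj
  have hgc : Continuous g := by
    have : g = ⇑((StrictMono.orderIsoOfSurjective f hmono hsurj).symm) := by
      funext y
      apply hinj
      rw [hri y]
      exact (StrictMono.orderIsoOfSurjective_self_symm_apply f hmono hsurj y).symm
    rw [this]
    exact OrderIso.continuous _
  have hdf : Differentiable ℝ f := (contDiff_infty_iff_deriv.mp hsm).1
  have hHD : ∀ y, HasDerivAt g ((deriv f (g y))⁻¹) y := by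
    intro y
    refine HasDerivAt.of_local_left_inverse hgc.continuousAt
      ((hdf (g y)).hasDerivAt) (ne_of_gt (hpos _)) ?_
    exact Filter.Eventually.of_forall hri
  have hperg : ∀ x, g (x + 1) = g x + 1 := by
    intro x
    have h1 : f (g x + 1) = x + 1 := by rw [hper, hri x]
    have := hli (g x + 1)
    rw [h1] at this
    exact this
  have hderiv_g : deriv g = fun y => (deriv f (g y))⁻¹ := funext fun y => (hHD y).deriv
  have hdfc : ContDiff ℝ (⊤:ℕ∞) (deriv f) := (contDiff_infty_iff_deriv.mp hsm).2
  have hcdn : ∀ n : ℕ, ContDiff ℝ (n : ℕ) g := by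
    intro n
    induction n with
    | zero => exact contDiff_zero.mpr hgc
    | succ n ih =>
      have : ((n+1:ℕ) : WithTop ℕ∞) = (n : WithTop ℕ∞) + 1 := by
        push_cast; rfl
      rw [this]
      refine contDiff_succ_iff_deriv.mpr ⟨fun y => (hHD y).differentiableAt, ?_, ?_⟩
      · intro h; exact absurd h (by simp)
      · rw [hderiv_g]
        exact ((hdfc.of_le (by exact_mod_cast le_top)).comp ih).inv fun y => ne_of_gt (hpos _)
  have hctop : ContDiff ℝ (⊤:ℕ∞) g := by
    rw [show ((⊤:ℕ∞) : WithTop ℕ∞) = (⊤ : ℕ∞) from rfl]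
    exact contDiff_infty.mpr hcdn
  refine ⟨⟨hctop, hperg, fun y => ?_⟩, hli, hri⟩
  rw [hderiv_g]
  exact inv_pos.mpr (hpos _)



lemma pow2_inv_pos (k : ℕ) : 0 < ((2:ℝ)^k)⁻¹ := by positivity

lemma pow2_inv_mono {m n : ℕ} (h : m ≤ n) : ((2:ℝ)^n)⁻¹ ≤ ((2:ℝ)^m)⁻¹ := by
  apply inv_anti₀ (by positivity)
  exact pow_le_pow_right₀ one_le_two h

lemma pow2_inv_half (k : ℕ) : ((2:ℝ)^(k+1))⁻¹ + ((2:ℝ)^(k+1))⁻¹ = ((2:ℝ)^k)⁻¹ := by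
  have h : (2:ℝ)^(k+1) = 2 * 2^k := by ring
  rw [h]
  have : (2:ℝ)^k ≠ 0 := by positivity
  field_simp
  ring

lemma pow2_inv_tendsto : Filter.Tendsto (fun n : ℕ => ((2:ℝ)^n)⁻¹) Filter.atTop (nhds 0) := by
  have : (fun n : ℕ => ((2:ℝ)^n)⁻¹) = fun n : ℕ => ((2:ℝ)⁻¹)^n := by
    funext n; rw [inv_pow]
  rw [this]
  exact tendsto_pow_atTop_nhds_zero_of_lt_one (by norm_num) (by norm_num)

lemma pow2_inv_tendsto_shift (c : ℕ) :
    Filter.Tendsto (fun n : ℕ => ((2:ℝ)^(n + c))⁻¹) Filter.atTop (nhds 0) :=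
  pow2_inv_tendsto.comp (Filter.tendsto_add_atTop_nat c)



lemma master (r : ℕ) (h : ℕ → ℝ → ℝ)
    (hl : ∀ n, IsCircleDiffeoLift (h n))
    (hb : ∀ i k, 1 ≤ k → i ≤ k + r → ∀ x,
      |iteratedDeriv i (h k) x - iteratedDeriv i (h (k-1)) x| ≤ ((2:ℝ) ^ (k + r + 1))⁻¹) :
    ∃ H : ℝ → ℝ, ContDiff ℝ (⊤:ℕ∞) H ∧
      (∀ x, Filter.Tendsto (fun n => h n x) Filter.atTop (nhds (H x))) ∧
      (∀ i n x, i ≤ n + r + 1 →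
        |iteratedDeriv i (h n) x - iteratedDeriv i H x| ≤ ((2:ℝ) ^ (n + r + 1))⁻¹) ∧
      (∀ x, H (x + 1) = H x + 1) := by
  have hdiffu : ∀ i n, Differentiable ℝ (iteratedDeriv i (h n)) := by
    intro i n
    have hlt : ((i:ℕ∞) : WithTop ℕ∞) < ((⊤:ℕ∞) : WithTop ℕ∞) := WithTop.coe_lt_coe.mpr (by simp)
    exact (hl n).1.differentiable_iteratedDeriv i (by exact_mod_cast hlt)
  -- telescoping estimate
  have T : ∀ i m n x, i ≤ m + r + 1 → m ≤ n →
      |iteratedDeriv i (h n) x - iteratedDeriv i (h m) x| ≤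
        ((2:ℝ)^(m+r+1))⁻¹ - ((2:ℝ)^(n+r+1))⁻¹ := by
    intro i m n x hi hmn
    induction n, hmn using Nat.le_induction with
    | base => simp
    | succ n hmn ih =>
      have h1 := hb i (n+1) (by omega) (by omega) x
      have h3 : n + 1 - 1 = n := by omega
      rw [h3] at h1
      have h4 : n + 1 + r + 1 = n + r + 1 + 1 := by omega
      rw [h4] at h1 ⊢
      have h2 := pow2_inv_half (n+r+1)
      have h5 := abs_sub_le (iteratedDeriv i (h (n+1)) x) (iteratedDeriv i (h n) x)
        (iteratedDeriv i (h m) x)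
      linarith
  -- existence of limits of iterated derivatives
  have hex : ∀ i x, ∃ l, Filter.Tendsto (fun n => iteratedDeriv i (h n) x)
      Filter.atTop (nhds l) := by
    intro i x
    have hc : CauchySeq (fun n => iteratedDeriv i (h (n + i)) x) := by
      apply cauchySeq_of_le_tendsto_0 (fun N => ((2:ℝ)^(N+i+r+1))⁻¹)
      · intro n m N hn hm
        rcases le_total n m with hnm | hnm
        · rw [dist_comm, Real.dist_eq]
          refine (T i (n+i) (m+i) x (by omega) (by omega)).trans ?_
          have := pow2_inv_pos (m+i+r+1)
          have := pow2_inv_mono (show N+i+r+1 ≤ n+i+r+1 by omega)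
          linarith
        · rw [Real.dist_eq]
          refine (T i (m+i) (n+i) x (by omega) (by omega)).trans ?_
          have := pow2_inv_pos (n+i+r+1)
          have := pow2_inv_mono (show N+i+r+1 ≤ m+i+r+1 by omega)
          linarith
      · have he : (fun n : ℕ => ((2:ℝ)^(n+(i+r+1)))⁻¹) = fun N : ℕ => ((2:ℝ)^(N+i+r+1))⁻¹ := by
          funext n
          have : n+(i+r+1) = n+i+r+1 := by omega
          rw [this]
        rw [← he]
        exact pow2_inv_tendsto_shift (i+r+1)
    obtain ⟨l, hlim⟩ := cauchySeq_tendsto_of_complete hc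
    exact ⟨l, (Filter.tendsto_add_atTop_iff_nat i).mp hlim⟩
  choose L hL using hex
  -- tail bound
  have htail : ∀ i n x, i ≤ n + r + 1 →
      |iteratedDeriv i (h n) x - L i x| ≤ ((2:ℝ)^(n+r+1))⁻¹ := by
    intro i n x hi
    have hlim : Filter.Tendsto (fun m => |iteratedDeriv i (h n) x - iteratedDeriv i (h m) x|)
        Filter.atTop (nhds |iteratedDeriv i (h n) x - L i x|) :=
      (Filter.Tendsto.sub tendsto_const_nhds (hL i x)).abs
    refine le_of_tendsto hlim ?_
    filter_upwards [Filter.eventually_ge_atTop n] with m hm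
    rw [abs_sub_comm]
    refine (T i n m x hi hm).trans ?_
    have := pow2_inv_pos (m+r+1)
    linarith
  -- uniform convergence
  have hTU : ∀ i, TendstoUniformly (fun n => iteratedDeriv i (h n)) (L i) Filter.atTop := by
    intro i
    rw [Metric.tendstoUniformly_iff]
    intro ε hε
    filter_upwards [(pow2_inv_tendsto_shift (r+1)).eventually (gt_mem_nhds hε),
      Filter.eventually_ge_atTop i] with n hn hni x
    rw [dist_comm, Real.dist_eq]
    exact lt_of_le_of_lt (htail i n x (by omega)) hn
  -- derivatives of the limits
  have hHD : ∀ i x, HasDerivAt (L i) (L (i+1) x) x := by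
    intro i
    refine hasDerivAt_of_tendstoUniformly (hTU (i+1)) ?_ (fun x => hL i x)
    refine Filter.Eventually.of_forall fun n x => ?_
    have hd := (hdiffu i n x).hasDerivAt
    have h5 : iteratedDeriv (i+1) (h n) x = deriv (iteratedDeriv i (h n)) x :=
      congrFun iteratedDeriv_succ x
    rw [h5]
    exact hd
  -- iterated derivatives of the limit
  have hiter : ∀ i, iteratedDeriv i (L 0) = L i := by
    intro i
    induction i with
    | zero => exact iteratedDeriv_zero
    | succ i ih =>
      rw [iteratedDeriv_succ, ih]
      exact funext fun x => (hHD i x).deriv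
  -- smoothness
  have hcd : ∀ n : ℕ, ∀ i, ContDiff ℝ (n : ℕ) (L i) := by
    intro n
    induction n with
    | zero =>
      intro i
      exact contDiff_zero.mpr (Differentiable.continuous fun x => (hHD i x).differentiableAt)
    | succ n ih =>
      intro i
      have hcast : ((n+1:ℕ) : WithTop ℕ∞) = (n : WithTop ℕ∞) + 1 := by push_cast; rfl
      rw [hcast]
      refine contDiff_succ_iff_deriv.mpr ⟨fun x => (hHD i x).differentiableAt, ?_, ?_⟩
      · intro hω; exact absurd hω (by simp)
      · have hd : deriv (L i) = L (i+1) := funext fun x => (hHD i x).deriv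
        rw [hd]
        exact ih (i+1)
  have hsmooth : ContDiff ℝ (⊤:ℕ∞) (L 0) := by
    rw [show ((⊤:ℕ∞) : WithTop ℕ∞) = (⊤ : ℕ∞) from rfl]
    exact contDiff_infty.mpr fun n => hcd n 0
  have hL0 : ∀ x, Filter.Tendsto (fun n => h n x) Filter.atTop (nhds (L 0 x)) := by
    intro x
    have := hL 0 x
    simpa [iteratedDeriv_zero] using this
  have hper : ∀ x, L 0 (x + 1) = L 0 x + 1 := by
    intro x
    have h1 := hL0 (x+1)
    have h2 : (fun n => h n (x+1)) = fun n => h n x + 1 := funext fun n => (hl n).2.1 x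
    rw [h2] at h1
    exact tendsto_nhds_unique h1 ((hL0 x).add tendsto_const_nhds)
  refine ⟨L 0, hsmooth, hL0, fun i n x hi => ?_, hper⟩
  rw [hiter i]
  exact htail i n x hi



lemma pow2_inv_tendsto_shift' (r : ℕ) :
    Filter.Tendsto (fun n : ℕ => ((2:ℝ)^(n+r+1))⁻¹) Filter.atTop (nhds 0) := by
  have he : (fun n : ℕ => ((2:ℝ)^(n+(r+1)))⁻¹) = fun n : ℕ => ((2:ℝ)^(n+r+1))⁻¹ := by
    funext n
    have : n+(r+1)=n+r+1 := by omega
    rw [this]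
  rw [← he]
  exact pow2_inv_tendsto_shift (r+1)

lemma invFun_rotLift (a : ℝ) : Function.invFun (RotLift a) = fun x => x - a := by
  have hinj : Function.Injective (RotLift a) := fun u v huv => by
    simpa [RotLift] using huv
  funext y
  have h1 : RotLift a (y - a) = y := by simp [RotLift]
  calc Function.invFun (RotLift a) y = Function.invFun (RotLift a) (RotLift a (y - a)) := by
        rw [h1]
    _ = y - a := Function.leftInverse_invFun hinj _


end Stmt15

/-- If `f₀ = R_{α₁}` with `|α - α₁| < 2^{-r-1}`, and `(f_n)` is a sequence of lifts of smooth
circle diffeomorphisms with `d_{n+r}(f_{n-1}, f_n) < 2^{-n-r-1}`, then `f_n` converges in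
every `C^s` norm (together with the inverses) to a lift `f` of a smooth circle diffeomorphism
with `d_r(f, R_α) < 2^{-r}`. -/
theorem stmt_15 (r : ℕ) (α α₁ : ℝ) (hclose : |α - α₁| < ((2 : ℝ) ^ (r + 1))⁻¹)
    (fseq : ℕ → ℝ → ℝ) (hlift : ∀ n, IsCircleDiffeoLift (fseq n))
    (h0 : fseq 0 = RotLift α₁)
    (hd : ∀ n, 1 ≤ n →
      liftDist (n + r) (fseq (n - 1)) (fseq n) < ((2 : ℝ) ^ (n + r + 1))⁻¹) :
    ∃ f : ℝ → ℝ, IsCircleDiffeoLift f ∧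
      (∀ s : ℕ,
        Tendsto (fun n => CrNorm s (fun x => fseq n x - f x)) atTop (nhds 0) ∧
        Tendsto (fun n => CrNorm s
          (fun x => Function.invFun (fseq n) x - Function.invFun f x)) atTop (nhds 0)) ∧
      liftDist r f (RotLift α) < ((2 : ℝ) ^ r)⁻¹ := by

  classical
  have hgl : ∀ n, IsCircleDiffeoLift (Function.invFun (fseq n)) :=
    fun n => (Stmt15.lift_inv (hlift n)).1
  have hgli : ∀ n, Function.LeftInverse (Function.invFun (fseq n)) (fseq n) :=
    fun n => (Stmt15.lift_inv (hlift n)).2.1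
  have hgri : ∀ n, Function.RightInverse (Function.invFun (fseq n)) (fseq n) :=
    fun n => (Stmt15.lift_inv (hlift n)).2.2
  -- difference bounds for the sequence
  have hbf : ∀ i k, 1 ≤ k → i ≤ k + r → ∀ x,
      |iteratedDeriv i (fseq k) x - iteratedDeriv i (fseq (k-1)) x| ≤ ((2:ℝ)^(k+r+1))⁻¹ := by
    intro i k hk hik x
    have hper := Stmt15.sub_lift_periodic (hlift (k-1)).2.1 (hlift k).2.1
    have hsmφ : ContDiff ℝ (⊤:ℕ∞) (fun x => fseq (k-1) x - fseq k x) :=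
      (hlift (k-1)).1.sub (hlift k).1
    have h1 := Stmt15.abs_iteratedDeriv_le_crNorm hsmφ hper hik x
    rw [Stmt15.iteratedDeriv_sub' (hlift (k-1)).1 (hlift k).1 i x] at h1
    have h2 : CrNorm (k+r) (fun x => fseq (k-1) x - fseq k x) ≤
        liftDist (k+r) (fseq (k-1)) (fseq k) := le_max_left _ _
    have h3 := (hd k hk).le
    rw [abs_sub_comm]
    linarith
  -- difference bounds for inverses
  have hbg : ∀ i k, 1 ≤ k → i ≤ k + r → ∀ x,
      |iteratedDeriv i (Function.invFun (fseq k)) x -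
        iteratedDeriv i (Function.invFun (fseq (k-1))) x| ≤ ((2:ℝ)^(k+r+1))⁻¹ := by
    intro i k hk hik x
    have hper := Stmt15.sub_lift_periodic (hgl (k-1)).2.1 (hgl k).2.1
    have hsmφ : ContDiff ℝ (⊤:ℕ∞)
        (fun x => Function.invFun (fseq (k-1)) x - Function.invFun (fseq k) x) :=
      (hgl (k-1)).1.sub (hgl k).1
    have h1 := Stmt15.abs_iteratedDeriv_le_crNorm hsmφ hper hik x
    rw [Stmt15.iteratedDeriv_sub' (hgl (k-1)).1 (hgl k).1 i x] at h1
    have h2 : CrNorm (k+r)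
        (fun x => Function.invFun (fseq (k-1)) x - Function.invFun (fseq k) x) ≤
        liftDist (k+r) (fseq (k-1)) (fseq k) := le_max_right _ _
    have h3 := (hd k hk).le
    rw [abs_sub_comm]
    linarith
  obtain ⟨F, hFsm, hFlim, hFtail, hFper⟩ := Stmt15.master r fseq hlift hbf
  obtain ⟨G, hGsm, hGlim, hGtail, hGper⟩ :=
    Stmt15.master r (fun n => Function.invFun (fseq n)) hgl hbg
  have hFtail0 : ∀ (n : ℕ) (x : ℝ), |fseq n x - F x| ≤ ((2:ℝ)^(n+r+1))⁻¹ := by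
    intro n x
    have := hFtail 0 n x (by omega)
    simpa [iteratedDeriv_zero] using this
  have hGtail0 : ∀ (n : ℕ) (x : ℝ),
      |Function.invFun (fseq n) x - G x| ≤ ((2:ℝ)^(n+r+1))⁻¹ := by
    intro n x
    have := hGtail 0 n x (by omega)
    simpa [iteratedDeriv_zero] using this
  have hFc : Continuous F := hFsm.continuous
  have hGc : Continuous G := hGsm.continuous
  -- G is a two-sided inverse of F
  have hGF : ∀ x, G (F x) = x := by
    intro x
    have t1 : Tendsto (fun n => G (fseq n x)) atTop (nhds (G (F x))) :=
      (hGc.continuousAt.tendsto).comp (hFlim x)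
    have t2 : Tendsto (fun n => Function.invFun (fseq n) (fseq n x) - G (fseq n x))
        atTop (nhds 0) := by
      apply squeeze_zero_norm (fun n => hGtail0 n (fseq n x)) (Stmt15.pow2_inv_tendsto_shift' r)
    have t3 : Tendsto (fun n => Function.invFun (fseq n) (fseq n x)) atTop
        (nhds (G (F x))) := by
      have := t2.add t1
      simpa using this
    have t4 : (fun n => Function.invFun (fseq n) (fseq n x)) = fun _ => x :=
      funext fun n => hgli n x
    rw [t4] at t3
    exact tendsto_nhds_unique t3 tendsto_const_nhds
  have hFG : ∀ y, F (G y) = y := by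
    intro y
    have t1 : Tendsto (fun n => F (Function.invFun (fseq n) y)) atTop (nhds (F (G y))) :=
      (hFc.continuousAt.tendsto).comp (hGlim y)
    have t2 : Tendsto (fun n => fseq n (Function.invFun (fseq n) y) -
        F (Function.invFun (fseq n) y)) atTop (nhds 0) := by
      apply squeeze_zero_norm (fun n => hFtail0 n _) (Stmt15.pow2_inv_tendsto_shift' r)
    have t3 : Tendsto (fun n => fseq n (Function.invFun (fseq n) y)) atTop
        (nhds (F (G y))) := by
      have := t2.add t1
      simpa using this
    have t4 : (fun n => fseq n (Function.invFun (fseq n) y)) = fun _ => y :=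
      funext fun n => hgri n y
    rw [t4] at t3
    exact tendsto_nhds_unique t3 tendsto_const_nhds
  have hFd : Differentiable ℝ F := (contDiff_infty_iff_deriv.mp hFsm).1
  have hGd : Differentiable ℝ G := (contDiff_infty_iff_deriv.mp hGsm).1
  -- positivity of the derivative
  have hderiv_pos : ∀ x, 0 < deriv F x := by
    intro x
    have hne : (1:ℝ) = deriv G (F x) * deriv F x := by
      have hcomp : HasDerivAt (G ∘ F) (deriv G (F x) * deriv F x) x :=
        (hGd (F x)).hasDerivAt.comp x (hFd x).hasDerivAt
      have hid : (G ∘ F) = id := funext fun z => hGF z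
      rw [hid] at hcomp
      exact (hasDerivAt_id x).unique hcomp
    have hdist : ∀ n, dist (deriv (fseq n) x) (deriv F x) ≤ ((2:ℝ)^(n+r+1))⁻¹ := by
      intro n
      rw [Real.dist_eq]
      have := hFtail 1 n x (by omega)
      simpa [iteratedDeriv_one] using this
    have tend : Tendsto (fun n => deriv (fseq n) x) atTop (nhds (deriv F x)) :=
      tendsto_iff_dist_tendsto_zero.mpr
        (squeeze_zero (fun n => dist_nonneg) hdist (Stmt15.pow2_inv_tendsto_shift' r))
    have hge : 0 ≤ deriv F x :=
      ge_of_tendsto tend (Eventually.of_forall fun n => ((hlift n).2.2 x).le)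
    have hne0 : deriv F x ≠ 0 := by
      intro hz
      rw [hz, mul_zero] at hne
      norm_num at hne
    exact lt_of_le_of_ne hge (Ne.symm hne0)
  have hFlift : IsCircleDiffeoLift F := ⟨hFsm, hFper, hderiv_pos⟩
  have hinvF : Function.invFun F = G := by
    have hFinj : Function.Injective F := Function.LeftInverse.injective hGF
    funext y
    have h1 : F (Function.invFun F y) = y := Function.invFun_eq ⟨G y, hFG y⟩
    exact hFinj (by rw [h1, hFG y])
  refine ⟨F, hFlift, ?_, ?_⟩
  · intro s
    constructor
    · apply squeeze_zero' (Eventually.of_forall fun n => Stmt15.crNorm_nonneg s _) ?_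
        (Stmt15.pow2_inv_tendsto_shift' r)
      filter_upwards [eventually_ge_atTop s] with n hn
      refine Stmt15.crNorm_le (Stmt15.pow2_inv_pos _).le fun i hi x => ?_
      rw [Stmt15.iteratedDeriv_sub' (hlift n).1 hFsm i x]
      exact hFtail i n x (by omega)
    · simp only [hinvF]
      apply squeeze_zero' (Eventually.of_forall fun n => Stmt15.crNorm_nonneg s _) ?_
        (Stmt15.pow2_inv_tendsto_shift' r)
      filter_upwards [eventually_ge_atTop s] with n hn
      refine Stmt15.crNorm_le (Stmt15.pow2_inv_pos _).le fun i hi x => ?_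
      rw [Stmt15.iteratedDeriv_sub' (hgl n).1 hGsm i x]
      exact hGtail i n x (by omega)
  · have hbpos : (0:ℝ) ≤ ((2:ℝ)^(r+1))⁻¹ + |α - α₁| := by positivity
    have h0r : ((2:ℝ)^(0+r+1))⁻¹ = ((2:ℝ)^(r+1))⁻¹ := by norm_num
    have hbound : liftDist r F (RotLift α) ≤ ((2:ℝ)^(r+1))⁻¹ + |α - α₁| := by
      apply max_le
      · refine Stmt15.crNorm_le hbpos fun i hi x => ?_
        have hsplit : (fun x => F x - RotLift α x) =
            fun x => (F x - fseq 0 x) + (α₁ - α) := by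
          funext y
          rw [h0]
          simp only [RotLift]
          ring
        rw [hsplit]
        rcases Nat.eq_zero_or_pos i with h0i | h0i
        · subst h0i
          simp only [iteratedDeriv_zero]
          have h1 := hFtail0 0 x
          rw [h0r] at h1
          have h2 : |α₁ - α| = |α - α₁| := abs_sub_comm _ _
          calc |(F x - fseq 0 x) + (α₁ - α)| ≤ |F x - fseq 0 x| + |α₁ - α| := abs_add_le _ _
            _ ≤ ((2:ℝ)^(r+1))⁻¹ + |α - α₁| := by
                rw [h2]
                have := abs_sub_comm (F x) (fseq 0 x)
                rw [this]
                linarith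
        · rw [Stmt15.iteratedDeriv_add_const' _ h0i x]
          rw [Stmt15.iteratedDeriv_sub' hFsm (hlift 0).1 i x]
          have h1 := hFtail i 0 x (by omega)
          rw [abs_sub_comm] at h1
          rw [h0r] at h1
          have := abs_nonneg (α - α₁)
          linarith
      · rw [hinvF, Stmt15.invFun_rotLift]
        refine Stmt15.crNorm_le hbpos fun i hi x => ?_
        have hg0 : Function.invFun (fseq 0) = fun x => x - α₁ := by
          rw [h0, Stmt15.invFun_rotLift]
        have hsplit : (fun x => G x - (x - α)) =
            fun x => (G x - Function.invFun (fseq 0) x) + (α - α₁) := by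
          funext y
          rw [hg0]
          ring
        rw [hsplit]
        rcases Nat.eq_zero_or_pos i with h0i | h0i
        · subst h0i
          simp only [iteratedDeriv_zero]
          have h1 := hGtail0 0 x
          rw [h0r] at h1
          calc |(G x - Function.invFun (fseq 0) x) + (α - α₁)| ≤
              |G x - Function.invFun (fseq 0) x| + |α - α₁| := abs_add_le _ _
            _ ≤ ((2:ℝ)^(r+1))⁻¹ + |α - α₁| := by
                have := abs_sub_comm (G x) (Function.invFun (fseq 0) x)
                rw [this]
                linarith
        · rw [Stmt15.iteratedDeriv_add_const' _ h0i x]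
          rw [Stmt15.iteratedDeriv_sub' hGsm (hgl 0).1 i x]
          have h1 := hGtail i 0 x (by omega)
          rw [abs_sub_comm] at h1
          rw [h0r] at h1
          have := abs_nonneg (α - α₁)
          linarith
    have hhalf := Stmt15.pow2_inv_half r
    calc liftDist r F (RotLift α) ≤ ((2:ℝ)^(r+1))⁻¹ + |α - α₁| := hbound
      _ < ((2:ℝ)^r)⁻¹ := by linarith
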